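/- In a finite DAG, if a vertex v has in-degree 1 with unique in-edge from u, then every path from any source y to any vertex w passing through v also passes through u immediately before v; consequently eliminating v (merging the weight c(u,v) into each out-edge of v, i.e., replacing each edge (v,s) by (u,s) with weight c(u,v)·c(v,s)) preserves all source-to-sink path sums. -/

import Mathlib

open scoped Classical

def IsPath {V : Type*} (E : V → V → Prop) (u v : V) (l : List V) : Prop :=
  l ≠ [] ∧ l.Chain' E ∧ l.head? = some u ∧ l.getLast? = some v

def pathWeight {V R : Type*} [CommRing R] (c : V → V → R) (l : List V) : R :=
  ((l.zip l.tail).map fun p => c p.1 p.2).prod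

noncomputable def pathSum {V R : Type*} [CommRing R] (E : V → V → Prop) (c : V → V → R)
    (u v : V) : R :=
  ∑ᶠ l ∈ {l : List V | IsPath E u v l}, pathWeight c l

section Aux
variable {V R : Type*} [Fintype V] [CommRing R]

lemma chain'_nodup {E : V → V → Prop} (hacyc : ∀ a : V, ¬ Relation.TransGen E a a)
    {l : List V} (hl : l.Chain' E) : l.Nodup := by
  haveI : IsTrans V (Relation.TransGen E) := ⟨fun _ _ _ => Relation.TransGen.trans⟩
  have h1 : l.Chain' (Relation.TransGen E) := hl.imp fun _ _ h => Relation.TransGen.single h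
  have h2 : l.Pairwise (Relation.TransGen E) := List.isChain_iff_pairwise.mp h1
  exact h2.imp fun h => by rintro rfl; exact hacyc _ h

lemma paths_finite (E : V → V → Prop) (hacyc : ∀ a : V, ¬ Relation.TransGen E a a)
    (y x : V) : {l : List V | IsPath E y x l}.Finite :=
  (List.finite_length_le V (Fintype.card V)).subset fun _ hl =>
    (chain'_nodup hacyc hl.2.1).length_le_card

lemma pathSum_eq_finset (E : V → V → Prop) (hacyc : ∀ a : V, ¬ Relation.TransGen E a a)
    (c : V → V → R) (y x : V) :
    pathSum E c y x = ∑ l ∈ (paths_finite E hacyc y x).toFinset, pathWeight c l := by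
  rw [pathSum, ← finsum_mem_coe_finset, Set.Finite.coe_toFinset]

omit [Fintype V] in
lemma pathWeight_cons (c : V → V → R) (a b : V) (t : List V) :
    pathWeight c (a :: b :: t) = c a b * pathWeight c (b :: t) := by
  simp [pathWeight]

lemma pathSum_self (E : V → V → Prop) (hacyc : ∀ a : V, ¬ Relation.TransGen E a a)
    (c : V → V → R) (x : V) : pathSum E c x x = 1 := by
  have hset : {l : List V | IsPath E x x l} = {[x]} := by
    ext l
    simp only [Set.mem_setOf_eq, Set.mem_singleton_iff]
    constructor
    · rintro ⟨hne, hch, hh, hl⟩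
      obtain ⟨a, t, rfl⟩ := List.exists_cons_of_ne_nil hne
      rw [List.head?_cons, Option.some_inj] at hh
      cases t with
      | nil => rw [hh]
      | cons b t' =>
        exfalso
        have hnd := chain'_nodup hacyc hch
        rw [List.getLast?_cons_cons] at hl
        have hxmem : x ∈ b :: t' := by
          obtain ⟨h, hx2⟩ := List.mem_getLast?_eq_getLast (show x ∈ (b::t').getLast? from hl)
          exact hx2 ▸ List.getLast_mem h
        exact (List.nodup_cons.mp hnd).1 (hh ▸ hxmem)
    · rintro rfl
      exact ⟨by simp, List.isChain_singleton _, by simp, by simp⟩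
  rw [pathSum, hset, finsum_mem_singleton]
  simp [pathWeight]

end Aux

section Rec
variable {V R : Type*} [Fintype V] [CommRing R]

lemma pathSum_rec (E : V → V → Prop) (hacyc : ∀ a : V, ¬ Relation.TransGen E a a)
    (c : V → V → R) {y x : V} (hyx : y ≠ x) :
    pathSum E c y x = ∑ b : V, if E y b then c y b * pathSum E c b x else 0 := by
  classical
  rw [pathSum_eq_finset E hacyc c y x]
  have hset : (paths_finite E hacyc y x).toFinset =
      Finset.univ.biUnion (fun b => if E y b then
        ((paths_finite E hacyc b x).toFinset.image (y :: ·)) else ∅) := by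
    ext l
    simp only [Set.Finite.mem_toFinset, Set.mem_setOf_eq, Finset.mem_biUnion, Finset.mem_univ,
      true_and]
    constructor
    · rintro ⟨hne, hch, hh, hl⟩
      obtain ⟨t, rfl⟩ : ∃ t, l = y :: t := by
        cases l with
        | nil => exact absurd rfl hne
        | cons a t =>
          rw [List.head?_cons, Option.some_inj] at hh
          exact ⟨t, by rw [hh]⟩
      cases t with
      | nil => exact absurd (by simpa using hl) hyx
      | cons b t' =>
        refine ⟨b, ?_⟩
        have hEyb : E y b := (List.isChain_cons_cons.mp hch).1
        rw [if_pos hEyb, Finset.mem_image]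
        refine ⟨b :: t', ?_, rfl⟩
        rw [Set.Finite.mem_toFinset]
        exact ⟨by simp, (List.isChain_cons_cons.mp hch).2, by simp,
          by rw [List.getLast?_cons_cons] at hl; exact hl⟩
    · rintro ⟨b, hmem⟩
      by_cases hEyb : E y b
      · rw [if_pos hEyb, Finset.mem_image] at hmem
        obtain ⟨t, ht, rfl⟩ := hmem
        rw [Set.Finite.mem_toFinset] at ht
        obtain ⟨hne, hch, hh, hl⟩ := ht
        obtain ⟨t', rfl⟩ : ∃ t', t = b :: t' := by
          cases t with
          | nil => exact absurd rfl hne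
          | cons a t' =>
            rw [List.head?_cons, Option.some_inj] at hh
            exact ⟨t', by rw [hh]⟩
        exact ⟨by simp, List.isChain_cons_cons.mpr ⟨hEyb, hch⟩, by simp,
          by rw [List.getLast?_cons_cons]; exact hl⟩
      · simp [hEyb] at hmem
  have hdisj : Set.PairwiseDisjoint ((Finset.univ : Finset V) : Set V) (fun b => if E y b then
      ((paths_finite E hacyc b x).toFinset.image (y :: ·)) else ∅) := by
    intro b _ b' _ hbb'
    simp only [Function.onFun]
    rw [Finset.disjoint_left]
    intro l hlb hlb'
    have key : ∀ b₀ : V, l ∈ (if E y b₀ then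
        ((paths_finite E hacyc b₀ x).toFinset.image (y :: ·)) else ∅) →
        l.tail.head? = some b₀ := by
      intro b₀ h
      by_cases hE0 : E y b₀
      · rw [if_pos hE0, Finset.mem_image] at h
        obtain ⟨t, ht, rfl⟩ := h
        rw [Set.Finite.mem_toFinset] at ht
        exact ht.2.2.1
      · simp [hE0] at h
    have h1 := key b hlb
    have h2 := key b' hlb'
    rw [h1] at h2
    exact hbb' (Option.some_inj.mp h2)
  rw [hset, Finset.sum_biUnion hdisj]
  apply Finset.sum_congr rfl
  intro b _
  by_cases hEyb : E y b
  · rw [if_pos hEyb, if_pos hEyb, Finset.sum_image (fun _ _ _ _ h => by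
      simpa using h), pathSum_eq_finset E hacyc c b x, Finset.mul_sum]
    apply Finset.sum_congr rfl
    intro t ht
    rw [Set.Finite.mem_toFinset] at ht
    obtain ⟨hne, hch, hh, hl⟩ := ht
    obtain ⟨t', rfl⟩ : ∃ t', t = b :: t' := by
      cases t with
      | nil => exact absurd rfl hne
      | cons a t' =>
        rw [List.head?_cons, Option.some_inj] at hh
        exact ⟨t', by rw [hh]⟩
    exact pathWeight_cons c y b t'
  · simp [hEyb]

end Rec

/-- If the intermediate vertex `v` has in-degree 1 with unique in-edge from `u`, then
(1) on every path from a source `y`, each occurrence of `v` is immediately preceded by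
`u`, and (2) eliminating `v` — deleting `v` with its incident edges and adding, for every
out-neighbour `s` of `v`, an edge `u → s` of weight `c u v * c v s` (added to the weight
of a pre-existing edge `u → s`) — preserves all source-to-sink path sums. -/
theorem stmt17 {V R : Type*} [Fintype V] [CommRing R] (E : V → V → Prop)
    (hacyc : ∀ a : V, ¬ Relation.TransGen E a a) (c : V → V → R)
    (u v : V) (hE : E u v) (huniq : ∀ a, E a v → a = u) (hout : ∃ s, E v s) :
    (∀ (y z : V) (l : List V), (∀ a, ¬ E a y) → IsPath E y z l →
      ∀ i : ℕ, l[i + 1]? = some v → l[i]? = some u) ∧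
    (∀ y x : V, (∀ a, ¬ E a y) → (∀ b, ¬ E x b) →
      pathSum (fun a b => (E a b ∧ a ≠ v ∧ b ≠ v) ∨ (a = u ∧ E v b))
        (fun a b => (if E a b ∧ a ≠ v ∧ b ≠ v then c a b else 0) +
          (if a = u ∧ E v b then c u v * c v b else 0)) y x
      = pathSum E c y x) := by
  constructor
  · intro y z l _ hl i hi
    obtain ⟨hlen, hv⟩ := List.getElem?_eq_some_iff.mp hi
    have hlen' : i < l.length := Nat.lt_of_succ_lt hlen
    have hch := hl.2.1
    rw [show l.Chain' E ↔ l.IsChain E from Iff.rfl, List.isChain_iff_getElem] at hch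
    have hEe : E (l.get ⟨i, by omega⟩) (l.get ⟨i + 1, by omega⟩) := hch i (by omega)
    have hgv : l.get ⟨i + 1, by omega⟩ = v := by simpa [List.get_eq_getElem] using hv
    have : l[i] = u := huniq _ (by rw [← hgv]; simpa [List.get_eq_getElem] using hEe)
    rw [List.getElem?_eq_some_iff]
    exact ⟨hlen', this⟩
  · intro y x hy hx
    set E' : V → V → Prop := fun a b => (E a b ∧ a ≠ v ∧ b ≠ v) ∨ (a = u ∧ E v b) with hE'def
    set c' : V → V → R := fun a b => (if E a b ∧ a ≠ v ∧ b ≠ v then c a b else 0) +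
          (if a = u ∧ E v b then c u v * c v b else 0) with hc'def
    have hsub : ∀ a b, E' a b → Relation.TransGen E a b := by
      rintro a b (⟨h, -, -⟩ | ⟨rfl, h⟩)
      · exact Relation.TransGen.single h
      · exact Relation.TransGen.head hE (Relation.TransGen.single h)
    have hacyc' : ∀ a, ¬ Relation.TransGen E' a a := by
      intro a h
      have h2 := Relation.TransGen.mono hsub _ _ h
      rw [Relation.transGen_idem] at h2
      exact hacyc a h2
    obtain ⟨s, hs⟩ := hout
    have hvx : v ≠ x := fun h => hx s (h ▸ hs)
    have hyv : y ≠ v := fun h => hy u (h ▸ hE)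
    have hwf : WellFounded (fun a b : V => Relation.TransGen E b a) := by
      haveI : IsTrans V (fun a b : V => Relation.TransGen E b a) :=
        ⟨fun _ _ _ hab hbc => hbc.trans hab⟩
      haveI : IsIrrefl V (fun a b : V => Relation.TransGen E b a) := ⟨fun a h => hacyc a h⟩
      exact Finite.wellFounded_of_trans_of_irrefl _
    have key : ∀ y', y' ≠ v → pathSum E' c' y' x = pathSum E c y' x := by
      intro y'
      refine hwf.induction
        (C := fun w => w ≠ v → pathSum E' c' w x = pathSum E c w x) y' ?_
      intro y' IH hy'v
      by_cases hyx : y' = x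
      · subst hyx
        rw [pathSum_self E' hacyc' c', pathSum_self E hacyc c]
      · rw [pathSum_rec E' hacyc' c' hyx, pathSum_rec E hacyc c hyx]
        have hIH : ∀ b, E' y' b → pathSum E' c' b x = pathSum E c b x := by
          intro b hb
          have hbv : b ≠ v := by
            rcases hb with ⟨-, -, h⟩ | ⟨-, h⟩
            · exact h
            · exact fun hbv => hacyc v (Relation.TransGen.single (hbv ▸ h))
          exact IH b (hsub _ _ hb) hbv
        have stepA : ∀ b : V, (if E' y' b then c' y' b * pathSum E' c' b x else 0)
            = (if E' y' b then c' y' b * pathSum E c b x else 0) := by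
          intro b
          by_cases hb : E' y' b
          · rw [if_pos hb, if_pos hb, hIH b hb]
          · rw [if_neg hb, if_neg hb]
        have stepA' : (∑ b : V, @ite R (E' y' b) (Classical.propDecidable _)
              (c' y' b * pathSum E' c' b x) 0)
            = ∑ b : V, if E' y' b then c' y' b * pathSum E c b x else 0 := by
          apply Finset.sum_congr rfl
          intro b _
          by_cases hb : E' y' b
          · rw [if_pos hb, if_pos hb, hIH b hb]
          · rw [if_neg hb, if_neg hb]
        rw [stepA']
        set g : V → R := fun b => pathSum E c b x with hgdef
        have hgv : g v = ∑ b : V, if E v b then c v b * g b else 0 :=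
          pathSum_rec E hacyc c hvx
        have hpt : ∀ b : V, (if E' y' b then c' y' b * g b else 0)
            = (if E y' b ∧ b ≠ v then c y' b * g b else 0)
              + (if y' = u ∧ E v b then c u v * c v b * g b else 0) := by
          intro b
          have huv : u ≠ v := fun h => hacyc v (Relation.TransGen.single (h ▸ hE))
          simp only [hE'def, hc'def]
          by_cases h2 : y' = u ∧ E v b
          · obtain ⟨rfl, hvb⟩ := h2
            by_cases h1 : E y' b ∧ b ≠ v
            · simp [h1, h1.1, h1.2, hvb, huv, add_mul]
            · have hc1 : ¬(E y' b ∧ y' ≠ v ∧ b ≠ v) := fun h => h1 ⟨h.1, h.2.2⟩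
              simp [h1, hc1, hvb, huv]
          · by_cases h1 : E y' b ∧ b ≠ v
            · have hc1 : E y' b ∧ y' ≠ v ∧ b ≠ v := ⟨h1.1, hy'v, h1.2⟩
              simp [hc1, h1, h2]
            · have hc1 : ¬(E y' b ∧ y' ≠ v ∧ b ≠ v) := fun h => h1 ⟨h.1, h.2.2⟩
              simp [hc1, h1, h2]
        set K : R := (if E y' v then c y' v * g v else 0) with hKdef
        have hpt2 : ∀ b : V, (if E y' b then c y' b * g b else 0)
            = (if E y' b ∧ b ≠ v then c y' b * g b else 0)
              + (if b = v then K else 0) := by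
          intro b
          by_cases hbv : b = v
          · have hneg : ¬(E y' b ∧ b ≠ v) := fun h => h.2 hbv
            rw [if_neg hneg, if_pos hbv, hbv, zero_add, hKdef]
          · rw [if_neg hbv, add_zero]
            by_cases hE2 : E y' b
            · rw [if_pos hE2, if_pos ⟨hE2, hbv⟩]
            · rw [if_neg hE2, if_neg (fun h => hE2 h.1)]
        simp only [show ∀ b, pathSum E c b x = g b from fun b => rfl, hpt, hpt2]
        rw [Finset.sum_add_distrib, Finset.sum_add_distrib]
        congr 1
        rw [Finset.sum_ite_eq' Finset.univ v (fun _ => K)]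
        simp only [Finset.mem_univ, if_true]
        rw [hKdef]
        by_cases hyu : y' = u
        · subst hyu
          rw [if_pos hE, hgv, Finset.mul_sum]
          apply Finset.sum_congr rfl
          intro b _
          by_cases hvb : E v b
          · simp [hvb, mul_assoc]
          · simp [hvb]
        · have : ¬ E y' v := fun h => hyu (huniq _ h)
          rw [if_neg this]
          apply Finset.sum_eq_zero
          intro b _
          simp [hyu]
    exact key y hyv
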